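/- With β(t) = q(1−q)(μ²/ς²)·sinh(β₂t/2) / (β₂·cosh(β₂t/2) + β₁·sinh(β₂t/2)), the function γ(t) := k·m̄·∫₀ᵗ β(s) ds satisfies γ(t)/t → k·m̄·B = λ as t → ∞. -/

import Mathlib

open Filter Topology

/-- Cesàro for integrals, zero-limit case. -/
theorem cesaro_integral_zero (f : ℝ → ℝ) (hf : Continuous f)
    (h : Tendsto f atTop (𝓝 0)) :
    Tendsto (fun t => (∫ s in (0 : ℝ)..t, f s) / t) atTop (𝓝 0) := by
  rw [Metric.tendsto_atTop] at h ⊢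
  intro ε hε
  obtain ⟨T₀, hT₀⟩ := h (ε / 2) (half_pos hε)
  set T := max T₀ 0 with hTdef
  have hT : ∀ s ≥ T, dist (f s) 0 < ε / 2 := fun s hs => hT₀ s (le_trans (le_max_left _ _) hs)
  have hTnn : 0 ≤ T := le_max_right _ _
  set A := |∫ s in (0 : ℝ)..T, f s| with hA
  have hA0 : 0 ≤ A := abs_nonneg _
  refine ⟨max (max T 1) (2 * A / ε + 1), fun t ht => ?_⟩
  have hTt : T ≤ t := le_trans (le_trans (le_max_left _ _) (le_max_left _ _)) ht
  have h1t : (1 : ℝ) ≤ t := le_trans (le_trans (le_max_right _ _) (le_max_left _ _)) ht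
  have h2t : 2 * A / ε + 1 ≤ t := le_trans (le_max_right _ _) ht
  have ht0 : 0 < t := lt_of_lt_of_le one_pos h1t
  rw [Real.dist_eq, sub_zero]
  have split : (∫ s in (0 : ℝ)..t, f s)
      = (∫ s in (0 : ℝ)..T, f s) + ∫ s in T..t, f s :=
    (intervalIntegral.integral_add_adjacent_intervals
      (hf.intervalIntegrable _ _) (hf.intervalIntegrable _ _)).symm
  have hbound : |∫ s in T..t, f s| ≤ ε / 2 * |t - T| := by
    rw [← Real.norm_eq_abs]
    apply intervalIntegral.norm_integral_le_of_norm_le_const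
    intro x hx
    rw [Set.uIoc_of_le hTt] at hx
    have := hT x (le_of_lt hx.1)
    rw [Real.dist_eq, sub_zero] at this
    rw [Real.norm_eq_abs]
    exact le_of_lt this
  have habs : |∫ s in (0 : ℝ)..t, f s| ≤ A + ε / 2 * (t - T) := by
    rw [split]
    calc |(∫ s in (0 : ℝ)..T, f s) + ∫ s in T..t, f s|
        ≤ A + |∫ s in T..t, f s| := abs_add_le _ _
      _ ≤ A + ε / 2 * |t - T| := by linarith
      _ = A + ε / 2 * (t - T) := by rw [abs_of_nonneg (by linarith)]
  rw [abs_div, abs_of_pos ht0, div_lt_iff₀ ht0]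
  have hAlt : A < t * (ε / 2) := by
    have : 2 * A / ε < t := by linarith
    rw [div_lt_iff₀ hε] at this
    nlinarith
  nlinarith

/-- Cesàro for integrals. -/
theorem cesaro_integral (f : ℝ → ℝ) (L : ℝ) (hf : Continuous f)
    (h : Tendsto f atTop (𝓝 L)) :
    Tendsto (fun t => (∫ s in (0 : ℝ)..t, f s) / t) atTop (𝓝 L) := by
  have h0 := cesaro_integral_zero (fun s => f s - L) (hf.sub continuous_const)
    (by simpa using h.sub_const L)
  have heq : ∀ᶠ t in atTop,
      (∫ s in (0 : ℝ)..t, (f s - L)) / t = (∫ s in (0 : ℝ)..t, f s) / t - L := by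
    filter_upwards [eventually_gt_atTop (0 : ℝ)] with t ht
    rw [intervalIntegral.integral_sub (hf.intervalIntegrable _ _)
      (intervalIntegrable_const), intervalIntegral.integral_const]
    field_simp
    simp
  have := h0.congr' heq
  have := this.add_const L
  simpa using this

set_option maxHeartbeats 1000000 in
/-- Heston model: with `β` the explicit Riccati solution, the function
`γ(t) = k·m̄·∫₀ᵗ β(s) ds` satisfies `γ(t)/t → k·m̄·B = λ` as `t → ∞`. -/
theorem stmt14 (k m μ ς σ ρ q : ℝ)
    (hk : 0 < k) (hm : 0 < m) (hμ : μ ≠ 0) (hς : 0 < ς) (hσ : 0 < σ)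
    (hρ : ρ ∈ Set.Ioo (-1 : ℝ) 1) (hq : q ∈ Set.Ioo (0 : ℝ) 1)
    (β₁ β₂ B lam : ℝ)
    (hβ₁ : β₁ = k + q * μ * ρ * σ / ς)
    (hβ₂ : β₂ = Real.sqrt (β₁ ^ 2 + q * (1 - q * ρ ^ 2) * μ ^ 2 * σ ^ 2 / ς ^ 2))
    (hB : B = (1 - q) * (β₂ - β₁) / ((1 - q * ρ ^ 2) * σ ^ 2))
    (hlam : lam = k * m * B)
    (β γ : ℝ → ℝ)
    (hβ : ∀ t, β t = q * (1 - q) * (μ ^ 2 / ς ^ 2) * Real.sinh (β₂ * t / 2) /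
        (β₂ * Real.cosh (β₂ * t / 2) + β₁ * Real.sinh (β₂ * t / 2)))
    (hγ : ∀ t, γ t = k * m * ∫ s in (0 : ℝ)..t, β s) :
    Tendsto (fun t => γ t / t) atTop (𝓝 lam) := by
  obtain ⟨hρ1, hρ2⟩ := hρ
  obtain ⟨hq0, hq1⟩ := hq
  have hqρ : 0 < 1 - q * ρ ^ 2 := by nlinarith [sq_nonneg ρ]
  have hE : 0 < q * (1 - q * ρ ^ 2) * μ ^ 2 * σ ^ 2 / ς ^ 2 := by
    have hμ2 : 0 < μ ^ 2 := by positivity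
    positivity
  have hsq : β₂ ^ 2 = β₁ ^ 2 + q * (1 - q * ρ ^ 2) * μ ^ 2 * σ ^ 2 / ς ^ 2 := by
    rw [hβ₂, Real.sq_sqrt (by nlinarith [sq_nonneg β₁])]
  have hβ₂abs : |β₁| < β₂ := by
    rw [hβ₂]
    have : |β₁| = Real.sqrt (β₁ ^ 2) := by rw [Real.sqrt_sq_eq_abs]
    rw [this]
    apply Real.sqrt_lt_sqrt (sq_nonneg _)
    linarith
  have hβ₂pos : 0 < β₂ := lt_of_le_of_lt (abs_nonneg _) hβ₂abs
  have hsum : 0 < β₂ + β₁ := by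
    have := neg_abs_le β₁; linarith
  -- denominator positivity
  have hd : ∀ x : ℝ, 0 < β₂ * Real.cosh x + β₁ * Real.sinh x := by
    intro x
    have h1 : |Real.sinh x| < Real.cosh x := by
      rw [Real.abs_sinh, ← Real.cosh_abs]
      exact Real.sinh_lt_cosh _
    have h2 : |β₁ * Real.sinh x| ≤ |β₁| * Real.cosh x := by
      rw [abs_mul]
      exact mul_le_mul_of_nonneg_left (le_of_lt h1) (abs_nonneg _)
    have h3 : -(|β₁| * Real.cosh x) ≤ β₁ * Real.sinh x := by
      have := neg_abs_le (β₁ * Real.sinh x); linarith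
    have h4 : 0 < Real.cosh x := Real.cosh_pos x
    nlinarith
  set C := q * (1 - q) * (μ ^ 2 / ς ^ 2) with hC
  set L := C / (β₂ + β₁) with hL
  -- β is continuous
  have hβcont : Continuous β := by
    have : Continuous fun t => q * (1 - q) * (μ ^ 2 / ς ^ 2) * Real.sinh (β₂ * t / 2) /
        (β₂ * Real.cosh (β₂ * t / 2) + β₁ * Real.sinh (β₂ * t / 2)) := by
      apply Continuous.div
      · fun_prop
      · fun_prop
      · intro t; exact (hd _).ne'
    exact this.congr fun t => (hβ t).symm
  -- β tends to L
  have hβlim : Tendsto β atTop (𝓝 L) := by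
    have hkey : ∀ t : ℝ, β t = C * (1 - Real.exp (-(β₂ * t))) /
        (β₂ * (1 + Real.exp (-(β₂ * t))) + β₁ * (1 - Real.exp (-(β₂ * t)))) := by
      intro t
      set e1 := Real.exp (β₂ * t / 2) with he1def
      have he1 : 0 < e1 := Real.exp_pos _
      have hs : Real.sinh (β₂ * t / 2) = (e1 - e1⁻¹) / 2 := by
        rw [Real.sinh_eq, Real.exp_neg]
      have hc : Real.cosh (β₂ * t / 2) = (e1 + e1⁻¹) / 2 := by
        rw [Real.cosh_eq, Real.exp_neg]
      have he : Real.exp (-(β₂ * t)) = e1⁻¹ * e1⁻¹ := by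
        rw [show -(β₂ * t) = -(β₂ * t / 2) + -(β₂ * t / 2) by ring, Real.exp_add,
          Real.exp_neg]
      have hD1 : 0 < β₂ * ((e1 + e1⁻¹) / 2) + β₁ * ((e1 - e1⁻¹) / 2) := by
        have := hd (β₂ * t / 2); rw [hs, hc] at this; exact this
      have hD2 : 0 < β₂ * (1 + e1⁻¹ * e1⁻¹) + β₁ * (1 - e1⁻¹ * e1⁻¹) := by
        have heq : β₂ * (1 + e1⁻¹ * e1⁻¹) + β₁ * (1 - e1⁻¹ * e1⁻¹)
            = 2 / e1 * (β₂ * ((e1 + e1⁻¹) / 2) + β₁ * ((e1 - e1⁻¹) / 2)) := by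
          field_simp
        rw [heq]
        positivity
      rw [hβ t, hs, hc, he, div_eq_div_iff hD1.ne' hD2.ne']
      field_simp
    have hexp : Tendsto (fun t : ℝ => Real.exp (-(β₂ * t))) atTop (𝓝 0) := by
      apply Real.tendsto_exp_atBot.comp
      apply tendsto_neg_atBot_iff.mpr
      exact tendsto_id.const_mul_atTop hβ₂pos
    have hnum : Tendsto (fun t : ℝ => C * (1 - Real.exp (-(β₂ * t)))) atTop (𝓝 (C * (1 - 0))) :=
      tendsto_const_nhds.mul (tendsto_const_nhds.sub hexp)
    have hden : Tendsto (fun t : ℝ => β₂ * (1 + Real.exp (-(β₂ * t))) +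
        β₁ * (1 - Real.exp (-(β₂ * t)))) atTop (𝓝 (β₂ * (1 + 0) + β₁ * (1 - 0))) :=
      (tendsto_const_nhds.mul (tendsto_const_nhds.add hexp)).add
        (tendsto_const_nhds.mul (tendsto_const_nhds.sub hexp))
    have := hnum.div hden (by simpa using hsum.ne')
    have hlimeq : C * (1 - 0) / (β₂ * (1 + 0) + β₁ * (1 - 0)) = L := by
      rw [hL]; ring_nf
    rw [hlimeq] at this
    exact this.congr fun t => (hkey t).symm
  -- Cesàro
  have hces := cesaro_integral β L hβcont hβlim
  have hlamL : lam = k * m * L := by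
    rw [hlam, hB, hL, hC]
    have h2 : β₂ - β₁ = q * (1 - q * ρ ^ 2) * μ ^ 2 * σ ^ 2 / ς ^ 2 / (β₂ + β₁) := by
      rw [eq_div_iff hsum.ne']
      nlinarith
    rw [h2]
    field_simp
  have hfinal : Tendsto (fun t => k * m * ((∫ s in (0 : ℝ)..t, β s) / t)) atTop
      (𝓝 (k * m * L)) := hces.const_mul _
  rw [hlamL]
  refine hfinal.congr fun t => ?_
  rw [hγ t, mul_div_assoc]
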